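/- Let C ⊆ {0,1}* be a prefix-free set of codewords with Kraft sum S = Σ_{w∈C} 2^{-L(w)} ≤ 1, and for each w ∈ C let p̃_w be a probability measure on a measurable space. Define the implied distribution p_Im = S^{-1}·Σ_{w∈C} 2^{-L(w)} p̃_w. Suppose a distribution p equals Σ_{w∈C} a(w) p̃_w for some probability mass function a on C. Then Σ_{w∈C} a(w)·L(w) ≥ D(p ‖ p_Im), the Kullback–Leibler divergence of p from p_Im. -/

import Mathlib

open MeasureTheory
-- Kullback–Leibler divergence in bits: `D(p‖q) = ∫ log₂(dp/dq) dp`, taken to be `+∞`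
-- if `p` is not absolutely continuous w.r.t. `q` or the integral is not defined.
open Classical in
noncomputable def klBits {α : Type*} [MeasurableSpace α] (p q : Measure α) : EReal :=
  if p ≪ q ∧ Integrable (fun x => Real.logb 2 (p.rnDeriv q x).toReal) p then
    ((∫ x, Real.logb 2 (p.rnDeriv q x).toReal ∂p : ℝ) : EReal)
  else ⊤

open scoped ENNReal

lemma aux3 (n : ℕ) (s : ℝ) (hs : 0 < s) :
    Real.logb 2 s ≤ (n : ℝ) + (s * 2 ^ (-(n : ℤ)) - 1) / Real.log 2 := by
  have h2 : (0:ℝ) < Real.log 2 := Real.log_pos one_lt_two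
  have hpow : (0:ℝ) < 2 ^ (-(n:ℤ)) := zpow_pos two_pos _
  have hlog : Real.log s ≤ (n : ℝ) * Real.log 2 + (s * 2 ^ (-(n:ℤ)) - 1) := by
    have h1 : Real.log (s * 2 ^ (-(n:ℤ))) ≤ s * 2 ^ (-(n:ℤ)) - 1 :=
      Real.log_le_sub_one_of_pos (mul_pos hs hpow)
    have h2' : Real.log (s * 2 ^ (-(n:ℤ))) = Real.log s + (-(n:ℤ)) * Real.log 2 := by
      rw [Real.log_mul hs.ne' hpow.ne', Real.log_zpow]
      push_cast
      ring
    rw [h2'] at h1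
    push_cast at h1
    nlinarith
  rw [Real.logb, div_le_iff₀ h2]
  have e : ((n:ℝ) + (s * 2 ^ (-(n:ℤ)) - 1)/Real.log 2) * Real.log 2
      = (n:ℝ) * Real.log 2 + (s * 2 ^ (-(n:ℤ)) - 1) := by
    field_simp
  linarith

lemma aux2 (t : ENNReal) :
    t * ENNReal.ofReal (-(Real.logb 2 t.toReal)) ≤ ENNReal.ofReal (1 / Real.log 2) := by
  have h2 : (0:ℝ) < Real.log 2 := Real.log_pos one_lt_two
  rcases eq_or_ne t ⊤ with rfl | htop
  · simp [Real.logb]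
  rcases eq_or_ne t 0 with rfl | h0
  · simp
  have hs : 0 < t.toReal := ENNReal.toReal_pos h0 htop
  rcases le_or_gt (-(Real.logb 2 t.toReal)) 0 with h | h
  · rw [ENNReal.ofReal_of_nonpos h]; simp
  · nth_rewrite 1 [(ENNReal.ofReal_toReal htop).symm]
    rw [← ENNReal.ofReal_mul ENNReal.toReal_nonneg]
    apply ENNReal.ofReal_le_ofReal
    set s := t.toReal with hsdef
    have key : s * (-Real.log s) ≤ 1 := by
      have hs1 : s < 1 := by
        by_contra hge
        push_neg at hge
        have : 0 ≤ Real.logb 2 s := Real.logb_nonneg one_lt_two hge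
        linarith
      have h3 : -Real.log s ≤ s⁻¹ - 1 := by
        have := Real.log_le_sub_one_of_pos (inv_pos.mpr hs)
        rw [Real.log_inv] at this; linarith
      calc s * (-Real.log s) ≤ s * (s⁻¹ - 1) := by nlinarith
        _ ≤ 1 := by rw [mul_sub, mul_inv_cancel₀ hs.ne']; nlinarith
    have e : s * -Real.logb 2 s = (s * -Real.log s) / Real.log 2 := by
      rw [Real.logb]; ring
    rw [e]
    exact div_le_div_of_nonneg_right key h2.le

lemma pow_ofReal (n : ℕ) :
    (2 : ENNReal) ^ (-(n : ℤ)) = ENNReal.ofReal ((2:ℝ) ^ (-(n:ℤ))) := by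
  rw [ENNReal.zpow_neg, zpow_natCast,
    zpow_neg, zpow_natCast,
    ENNReal.ofReal_inv_of_pos (by positivity), ENNReal.ofReal_pow (by norm_num)]
  norm_num

lemma pow_ne_zero' (n : ℕ) : (2 : ENNReal) ^ (-(n : ℤ)) ≠ 0 := by
  rw [pow_ofReal]
  simp only [ne_eq, ENNReal.ofReal_eq_zero, not_le]
  positivity

lemma pow_ne_top' (n : ℕ) : (2 : ENNReal) ^ (-(n : ℤ)) ≠ ⊤ := by
  rw [pow_ofReal]; exact ENNReal.ofReal_ne_top

lemma aux1 (n : ℕ) (t : ENNReal) :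
    ENNReal.ofReal (Real.logb 2 t.toReal) ≤
      (n : ENNReal) + ENNReal.ofReal (1 / Real.log 2) * ((2 : ENNReal) ^ (-(n : ℤ)) * t) := by
  have h2 : (0:ℝ) < Real.log 2 := Real.log_pos one_lt_two
  rcases eq_or_ne t ⊤ with rfl | htop
  · rw [ENNReal.mul_top (pow_ne_zero' n), ENNReal.mul_top (by
      simp only [ne_eq, ENNReal.ofReal_eq_zero, not_le]; positivity)]
    exact le_top.trans_eq (by simp)
  · have hofr : ((2 : ENNReal) ^ (-(n : ℤ)) * t) = ENNReal.ofReal ((2:ℝ) ^ (-(n:ℤ)) * t.toReal) := by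
      rw [ENNReal.ofReal_mul (by positivity), ← pow_ofReal, ENNReal.ofReal_toReal htop]
    rw [hofr, ← ENNReal.ofReal_mul (by positivity : (0:ℝ) ≤ 1/Real.log 2),
      ← ENNReal.ofReal_natCast, ← ENNReal.ofReal_add (by positivity) (by positivity)]
    apply ENNReal.ofReal_le_ofReal
    rcases eq_or_lt_of_le (ENNReal.toReal_nonneg : (0:ℝ) ≤ t.toReal) with h0 | hpos
    · rw [← h0]
      simp only [Real.logb, Real.log_zero, zero_div, mul_zero]
      positivity
    · have hb := aux3 n t.toReal hpos
      have hd : (t.toReal * 2 ^ (-(n:ℤ)) - 1)/Real.log 2 ≤ 1/Real.log 2 * (2 ^ (-(n:ℤ)) * t.toReal) := by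
        have e : 1/Real.log 2 * (2 ^ (-(n:ℤ)) * t.toReal) = (t.toReal * 2 ^ (-(n:ℤ)))/Real.log 2 := by
          ring
        rw [e]
        apply div_le_div_of_nonneg_right ?_ h2.le
        linarith
      linarith

/-- For a prefix-free codeword set `C` with Kraft sum `S ≤ 1`, decoder distributions `p̃_w`,
and `p = Σ_w a(w) p̃_w`, the expected codeword length is at least `D(p ‖ p_Im)` where
`p_Im = S⁻¹ Σ_w 2^{-L(w)} p̃_w` is the implied distribution. -/
theorem stmt_12 {α : Type*} [MeasurableSpace α] (C : Set (List Bool))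
    (hpf : ∀ w ∈ C, ∀ w' ∈ C, w <+: w' → w = w')
    (ptil : List Bool → Measure α) (hprob : ∀ w ∈ C, IsProbabilityMeasure (ptil w))
    (hS : (∑' w : C, (2 : ENNReal) ^ (-(w.1.length : ℤ))) ≤ 1)
    (a : C → ENNReal) (ha : ∑' w : C, a w = 1)
    (p : Measure α) (hp : p = Measure.sum (fun w : C => a w • ptil w)) :
    klBits p ((∑' w : C, (2 : ENNReal) ^ (-(w.1.length : ℤ)))⁻¹ •
        Measure.sum (fun w : C => (2 : ENNReal) ^ (-(w.1.length : ℤ)) • ptil w))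
      ≤ ((∑' w : C, a w * (w.1.length : ENNReal)) : ENNReal) := by
  classical
  by_cases hA : (∑' w : C, a w * (w.1.length : ENNReal)) = ⊤
  · rw [hA, EReal.coe_ennreal_top]
    exact le_top
  haveI hPM : ∀ w : C, IsProbabilityMeasure (ptil w) := fun w => hprob w w.2
  set S : ℝ≥0∞ := ∑' w : C, (2 : ENNReal) ^ (-(w.1.length : ℤ)) with hSdef
  set μ : Measure α := Measure.sum (fun w : C => (2 : ENNReal) ^ (-(w.1.length : ℤ)) • ptil w)
    with hμdef
  set q : Measure α := S⁻¹ • μ with hqdef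
  have haw_le : ∀ w : C, a w ≤ 1 := fun w => ha ▸ ENNReal.le_tsum w
  have hawtop : ∀ w : C, a w ≠ ⊤ := fun w => ne_top_of_le_ne_top ENNReal.one_ne_top (haw_le w)
  have hS0 : S ≠ 0 := by
    have hne : Nonempty C := by
      by_contra h
      rw [not_nonempty_iff] at h
      rw [tsum_empty] at ha
      exact one_ne_zero ha.symm
    obtain ⟨w⟩ := hne
    intro h
    have h1 : (2 : ENNReal) ^ (-(w.1.length : ℤ)) ≤ S := ENNReal.le_tsum w
    rw [h, le_zero_iff] at h1
    exact pow_ne_zero' w.1.length h1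
  have hStop : S ≠ ⊤ := ne_top_of_le_ne_top ENNReal.one_ne_top hS
  have hμuniv : μ Set.univ = S := by
    rw [hμdef, hSdef, Measure.sum_apply _ MeasurableSet.univ]
    exact tsum_congr fun w => by
      rw [Measure.smul_apply, measure_univ, smul_eq_mul, mul_one]
  haveI hqP : IsProbabilityMeasure q := ⟨by
    rw [hqdef, Measure.smul_apply, hμuniv, smul_eq_mul, ENNReal.inv_mul_cancel hS0 hStop]⟩
  haveI hpP : IsProbabilityMeasure p := ⟨by
    rw [hp, Measure.sum_apply _ MeasurableSet.univ]
    simp only [Measure.smul_apply, measure_univ, smul_eq_mul, mul_one]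
    exact ha⟩
  have hμq : μ = S • q := by
    rw [hqdef, smul_smul, ENNReal.mul_inv_cancel hS0 hStop, one_smul]
  have hwq : ∀ w : C, ptil w ≪ q := by
    intro w
    refine Measure.AbsolutelyContinuous.trans
      (Measure.absolutelyContinuous_smul (pow_ne_zero' w.1.length)
        : ptil w ≪ (2 : ENNReal) ^ (-(w.1.length : ℤ)) • ptil w) ?_
    refine Measure.AbsolutelyContinuous.trans
      ((Measure.le_sum (fun w : C => (2 : ENNReal) ^ (-(w.1.length : ℤ)) • ptil w)
        w).absolutelyContinuous) ?_
    rw [← hμdef, hμq]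
    exact Measure.smul_absolutelyContinuous
  have hpq : p ≪ q := by
    refine Measure.AbsolutelyContinuous.mk fun s hs h0 => ?_
    rw [hp, Measure.sum_apply _ hs]
    have : ∀ w : C, (a w • ptil w) s = 0 := fun w => by
      rw [Measure.smul_apply, hwq w h0, smul_eq_mul, mul_zero]
    simp [this]
  -- notation
  have hfm : Measurable (p.rnDeriv q) := Measure.measurable_rnDeriv p q
  have hlogm : Measurable fun x => Real.logb 2 (p.rnDeriv q x).toReal := by
    simp only [Real.logb]
    exact (Real.measurable_log.comp hfm.ennreal_toReal).div_const _
  set g : C → ℝ≥0∞ := fun w => ∫⁻ x, p.rnDeriv q x ∂ptil w with hgdef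
  have hgS : (∑' w : C, (2 : ENNReal) ^ (-(w.1.length : ℤ)) * g w) ≤ 1 := by
    have e1 : ∫⁻ x, p.rnDeriv q x ∂μ = ∑' w : C, (2 : ENNReal) ^ (-(w.1.length : ℤ)) * g w := by
      rw [hμdef, lintegral_sum_measure]
      exact tsum_congr fun w => lintegral_smul_measure _ _
    rw [← e1, hμq, lintegral_smul_measure]
    calc S * ∫⁻ x, p.rnDeriv q x ∂q ≤ S * 1 := by
          refine mul_le_mul' le_rfl ?_
          refine Measure.lintegral_rnDeriv_le.trans ?_
          rw [measure_univ]
      _ ≤ 1 := by rw [mul_one]; exact hS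
  have hgtop : ∀ w : C, g w ≠ ⊤ := by
    intro w htop
    have h1 : (2 : ENNReal) ^ (-(w.1.length : ℤ)) * g w ≤ 1 := (ENNReal.le_tsum w).trans hgS
    rw [htop, ENNReal.mul_top (pow_ne_zero' _)] at h1
    exact ENNReal.top_ne_one (le_antisymm h1 le_top)
  -- integrability
  have hpos_int : ∫⁻ x, ENNReal.ofReal (Real.logb 2 (p.rnDeriv q x).toReal) ∂p
      ≤ (∑' w : C, a w * (w.1.length : ENNReal)) + ENNReal.ofReal (1 / Real.log 2) := by
    have e1 : ∫⁻ x, ENNReal.ofReal (Real.logb 2 (p.rnDeriv q x).toReal) ∂p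
        = ∑' w : C, a w * ∫⁻ x, ENNReal.ofReal (Real.logb 2 (p.rnDeriv q x).toReal) ∂ptil w := by
      rw [hp, lintegral_sum_measure]
      exact tsum_congr fun w => lintegral_smul_measure _ _
    rw [e1]
    have e2 : ∀ w : C, ∫⁻ x, ENNReal.ofReal (Real.logb 2 (p.rnDeriv q x).toReal) ∂ptil w
        ≤ (w.1.length : ℝ≥0∞)
          + ENNReal.ofReal (1 / Real.log 2) * ((2 : ENNReal) ^ (-(w.1.length : ℤ)) * g w) := by
      intro w
      calc ∫⁻ x, ENNReal.ofReal (Real.logb 2 (p.rnDeriv q x).toReal) ∂ptil w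
          ≤ ∫⁻ x, ((w.1.length : ℝ≥0∞) + ENNReal.ofReal (1 / Real.log 2)
              * ((2 : ENNReal) ^ (-(w.1.length : ℤ)) * p.rnDeriv q x)) ∂ptil w :=
            lintegral_mono fun x => aux1 _ _
        _ = (w.1.length : ℝ≥0∞)
            + ENNReal.ofReal (1 / Real.log 2) * ((2 : ENNReal) ^ (-(w.1.length : ℤ)) * g w) := by
            rw [lintegral_add_left measurable_const, lintegral_const, measure_univ, mul_one,
              lintegral_const_mul' _ _ ENNReal.ofReal_ne_top,
              lintegral_const_mul' _ _ (pow_ne_top' _)]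
    calc ∑' w : C, a w * ∫⁻ x, ENNReal.ofReal (Real.logb 2 (p.rnDeriv q x).toReal) ∂ptil w
        ≤ ∑' w : C, (a w * (w.1.length : ℝ≥0∞)
            + ENNReal.ofReal (1 / Real.log 2) * ((2 : ENNReal) ^ (-(w.1.length : ℤ)) * g w)) := by
          refine ENNReal.tsum_le_tsum fun w => ?_
          calc a w * ∫⁻ x, ENNReal.ofReal (Real.logb 2 (p.rnDeriv q x).toReal) ∂ptil w
              ≤ a w * ((w.1.length : ℝ≥0∞)
                + ENNReal.ofReal (1 / Real.log 2) * ((2 : ENNReal) ^ (-(w.1.length : ℤ)) * g w)) :=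
                mul_le_mul' le_rfl (e2 w)
            _ = a w * (w.1.length : ℝ≥0∞)
                + a w * (ENNReal.ofReal (1 / Real.log 2)
                  * ((2 : ENNReal) ^ (-(w.1.length : ℤ)) * g w)) := mul_add _ _ _
            _ ≤ a w * (w.1.length : ℝ≥0∞)
                + ENNReal.ofReal (1 / Real.log 2)
                  * ((2 : ENNReal) ^ (-(w.1.length : ℤ)) * g w) := by
                exact add_le_add le_rfl (mul_le_of_le_one_left zero_le (haw_le w))
      _ = (∑' w : C, a w * (w.1.length : ℝ≥0∞))
          + ∑' w : C, ENNReal.ofReal (1 / Real.log 2)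
            * ((2 : ENNReal) ^ (-(w.1.length : ℤ)) * g w) := ENNReal.tsum_add
      _ ≤ (∑' w : C, a w * (w.1.length : ℝ≥0∞)) + ENNReal.ofReal (1 / Real.log 2) := by
          gcongr
          rw [ENNReal.tsum_mul_left]
          calc ENNReal.ofReal (1 / Real.log 2)
              * ∑' w : C, (2 : ENNReal) ^ (-(w.1.length : ℤ)) * g w
              ≤ ENNReal.ofReal (1 / Real.log 2) * 1 := mul_le_mul' le_rfl hgS
            _ = ENNReal.ofReal (1 / Real.log 2) := mul_one _
  have hneg_int : ∫⁻ x, ENNReal.ofReal (-(Real.logb 2 (p.rnDeriv q x).toReal)) ∂p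
      ≤ ENNReal.ofReal (1 / Real.log 2) := by
    rw [← lintegral_rnDeriv_mul (f := fun x => ENNReal.ofReal (-(Real.logb 2 (p.rnDeriv q x).toReal))) hpq
      (hlogm.neg.ennreal_ofReal.aemeasurable)]
    calc ∫⁻ x, p.rnDeriv q x * ENNReal.ofReal (-(Real.logb 2 (p.rnDeriv q x).toReal)) ∂q
        ≤ ∫⁻ _x, ENNReal.ofReal (1 / Real.log 2) ∂q := lintegral_mono fun x => aux2 _
      _ = ENNReal.ofReal (1 / Real.log 2) := by rw [lintegral_const, measure_univ, mul_one]
  have hInt : Integrable (fun x => Real.logb 2 (p.rnDeriv q x).toReal) p := by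
    refine ⟨hlogm.aestronglyMeasurable, ?_⟩
    have habs : ∀ r : ℝ, (‖r‖₊ : ℝ≥0∞) ≤ ENNReal.ofReal r + ENNReal.ofReal (-r) := by
      intro r
      rw [← enorm_eq_nnnorm, ← ofReal_norm]
      rcases le_or_gt 0 r with h | h
      · rw [Real.norm_of_nonneg h]; exact le_self_add
      · rw [Real.norm_of_nonpos h.le]
        exact (ENNReal.ofReal_le_ofReal le_rfl).trans le_add_self
    refine lt_of_le_of_lt (lintegral_mono fun x => habs _) ?_
    rw [lintegral_add_left hlogm.ennreal_ofReal]
    exact ENNReal.add_lt_top.mpr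
      ⟨lt_of_le_of_lt hpos_int (ENNReal.add_lt_top.mpr
        ⟨lt_top_iff_ne_top.mpr hA, ENNReal.ofReal_lt_top⟩),
        lt_of_le_of_lt hneg_int ENNReal.ofReal_lt_top⟩
  -- the real-valued estimates
  have haelt : ∀ᵐ x ∂q, p.rnDeriv q x < ⊤ := Measure.rnDeriv_lt_top p q
  have haepos : ∀ᵐ x ∂p, 0 < p.rnDeriv q x := Measure.rnDeriv_pos hpq
  set I : C → ℝ := fun w => ∫ x, Real.logb 2 (p.rnDeriv q x).toReal ∂ptil w with hIdef
  set B : C → ℝ := fun w => (w.1.length : ℝ)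
    + ((g w).toReal * (2 : ℝ) ^ (-(w.1.length : ℤ)) - 1) / Real.log 2 with hBdef
  have hHS : HasSum (fun w : C => (a w).toReal * I w)
      (∫ x, Real.logb 2 (p.rnDeriv q x).toReal ∂p) := by
    have hInt' : Integrable (fun x => Real.logb 2 (p.rnDeriv q x).toReal)
        (Measure.sum (fun w : C => a w • ptil w)) := by rw [← hp]; exact hInt
    have h1 := hasSum_integral_measure hInt'
    rw [← hp] at h1
    have e : (fun w : C => ∫ x, Real.logb 2 (p.rnDeriv q x).toReal ∂(a w • ptil w))
        = fun w : C => (a w).toReal * I w := funext fun w => by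
      rw [integral_smul_measure, smul_eq_mul, hIdef]
    rwa [e] at h1
  have hBw : ∀ w : C, (a w).toReal * I w ≤ (a w).toReal * B w := by
    intro w
    rcases eq_or_ne (a w) 0 with h0 | h0
    · rw [h0]; simp
    refine mul_le_mul_of_nonneg_left ?_ ENNReal.toReal_nonneg
    -- absolute continuity ptil w ≪ p
    have h1 : a w • ptil w ≤ p := hp ▸ Measure.le_sum (fun w : C => a w • ptil w) w
    have hle : ptil w ≤ (a w)⁻¹ • p := by
      refine Measure.le_iff'.2 fun s => ?_
      have h2 := Measure.le_iff'.1 h1 s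
      rw [Measure.smul_apply, smul_eq_mul] at h2
      rw [Measure.smul_apply, smul_eq_mul]
      have h3 := mul_le_mul' (le_refl (a w)⁻¹) h2
      rwa [← mul_assoc, ENNReal.inv_mul_cancel h0 (hawtop w), one_mul] at h3
    have hptilp : ptil w ≪ p := Measure.absolutelyContinuous_of_le_smul hle
    have hIw_int : Integrable (fun x => Real.logb 2 (p.rnDeriv q x).toReal) (ptil w) := by
      refine Integrable.mono_measure ?_ hle
      exact (integrable_smul_measure (ENNReal.inv_ne_zero.mpr (hawtop w))
        (ENNReal.inv_ne_top.mpr h0)).mpr hInt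
    have hfr_int : Integrable (fun x => (p.rnDeriv q x).toReal) (ptil w) :=
      integrable_toReal_of_lintegral_ne_top hfm.aemeasurable (hgtop w)
    have haeltw : ∀ᵐ x ∂ptil w, p.rnDeriv q x < ⊤ :=
      Filter.Eventually.filter_mono ((hwq w).ae_le) haelt
    have haeposw : ∀ᵐ x ∂ptil w, 0 < p.rnDeriv q x :=
      Filter.Eventually.filter_mono (hptilp.ae_le) haepos
    have hIB : I w ≤ ∫ x, ((w.1.length : ℝ)
        + ((p.rnDeriv q x).toReal * (2 : ℝ) ^ (-(w.1.length : ℤ)) - 1) / Real.log 2) ∂ptil w := by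
      refine integral_mono_ae hIw_int ?_ ?_
      · exact (integrable_const _).add
          (((hfr_int.mul_const _).sub (integrable_const 1)).div_const _)
      · filter_upwards [haeposw, haeltw] with x hx1 hx2
        exact aux3 _ _ (ENNReal.toReal_pos hx1.ne' hx2.ne)
    refine hIB.trans ?_
    have hint3 : Integrable (fun x => (p.rnDeriv q x).toReal * (2 : ℝ) ^ (-(w.1.length : ℤ)))
        (ptil w) := hfr_int.mul_const _
    have hint4 : Integrable
        (fun x => (p.rnDeriv q x).toReal * (2 : ℝ) ^ (-(w.1.length : ℤ)) - 1) (ptil w) := by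
      apply Integrable.sub hint3 (integrable_const 1)
    have hint2 : Integrable (fun x =>
        ((p.rnDeriv q x).toReal * (2 : ℝ) ^ (-(w.1.length : ℤ)) - 1) / Real.log 2) (ptil w) := by
      apply Integrable.div_const hint4
    have e2 : ∫ x, ((w.1.length : ℝ)
        + ((p.rnDeriv q x).toReal * (2 : ℝ) ^ (-(w.1.length : ℤ)) - 1) / Real.log 2) ∂ptil w
        = B w := by
      rw [integral_add (integrable_const _) hint2,
        integral_const, probReal_univ, one_smul,
        integral_div, integral_sub hint3 (integrable_const 1),
        integral_mul_const, integral_const, probReal_univ, one_smul,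
        integral_toReal hfm.aemeasurable haeltw]
    rw [e2]
  -- summability and sum computations
  have ht1 : Summable (fun w : C => (a w).toReal * (w.1.length : ℝ))
      ∧ (∑' w : C, (a w).toReal * (w.1.length : ℝ))
        = (∑' w : C, a w * (w.1.length : ℝ≥0∞)).toReal := by
    have e : ∀ w : C, (a w * (w.1.length : ℝ≥0∞)).toReal
        = (a w).toReal * (w.1.length : ℝ) := fun w => by
      rw [ENNReal.toReal_mul, ENNReal.toReal_natCast]
    constructor
    · refine (ENNReal.summable_toReal hA).congr fun w => e w
    · rw [ENNReal.tsum_toReal_eq fun w => ne_top_of_le_ne_top hA (ENNReal.le_tsum w)]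
      exact tsum_congr fun w => (e w).symm
  have ht3 : Summable (fun w : C => (a w).toReal) ∧ (∑' w : C, (a w).toReal) = 1 := by
    refine ⟨ENNReal.summable_toReal (ha ▸ ENNReal.one_ne_top), ?_⟩
    rw [← ENNReal.tsum_toReal_eq hawtop, ha, ENNReal.toReal_one]
  have hu_le : (∑' w : C, a w * ((2 : ENNReal) ^ (-(w.1.length : ℤ)) * g w)) ≤ 1 :=
    le_trans (ENNReal.tsum_le_tsum fun w =>
      mul_le_of_le_one_left zero_le (haw_le w)) hgS
  have hu_top : ∀ w : C, a w * ((2 : ENNReal) ^ (-(w.1.length : ℤ)) * g w) ≠ ⊤ := fun w =>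
    ne_top_of_le_ne_top ENNReal.one_ne_top ((ENNReal.le_tsum w).trans hu_le)
  have hpow_toReal : ∀ n : ℕ, ((2 : ENNReal) ^ (-(n : ℤ))).toReal = (2 : ℝ) ^ (-(n : ℤ)) :=
    fun n => by rw [pow_ofReal, ENNReal.toReal_ofReal (by positivity)]
  have ht2 : Summable (fun w : C => (a w).toReal * ((g w).toReal * (2 : ℝ) ^ (-(w.1.length : ℤ))))
      ∧ (∑' w : C, (a w).toReal * ((g w).toReal * (2 : ℝ) ^ (-(w.1.length : ℤ)))) ≤ 1 := by
    have e : ∀ w : C, (a w * ((2 : ENNReal) ^ (-(w.1.length : ℤ)) * g w)).toReal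
        = (a w).toReal * ((g w).toReal * (2 : ℝ) ^ (-(w.1.length : ℤ))) := fun w => by
      rw [ENNReal.toReal_mul, ENNReal.toReal_mul, hpow_toReal]
      ring
    constructor
    · exact (ENNReal.summable_toReal (ne_top_of_le_ne_top ENNReal.one_ne_top hu_le)).congr e
    · calc (∑' w : C, (a w).toReal * ((g w).toReal * (2 : ℝ) ^ (-(w.1.length : ℤ))))
          = ∑' w : C, (a w * ((2 : ENNReal) ^ (-(w.1.length : ℤ)) * g w)).toReal :=
            (tsum_congr e).symm
        _ = (∑' w : C, a w * ((2 : ENNReal) ^ (-(w.1.length : ℤ)) * g w)).toReal :=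
            (ENNReal.tsum_toReal_eq hu_top).symm
        _ ≤ 1 := (ENNReal.toReal_mono ENNReal.one_ne_top hu_le).trans_eq ENNReal.toReal_one
  have key : ∫ x, Real.logb 2 (p.rnDeriv q x).toReal ∂p
      ≤ (∑' w : C, a w * (w.1.length : ℝ≥0∞)).toReal := by
    have e : (fun w : C => (a w).toReal * B w)
        = fun w : C => (a w).toReal * (w.1.length : ℝ)
          + ((a w).toReal * ((g w).toReal * (2 : ℝ) ^ (-(w.1.length : ℤ)))
            - (a w).toReal) / Real.log 2 := by
      funext w
      simp only [hBdef]
      ring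
    have hsumB : Summable (fun w : C => (a w).toReal * B w) := by
      rw [e]; exact ht1.1.add ((ht2.1.sub ht3.1).div_const _)
    have h2log : (0:ℝ) < Real.log 2 := Real.log_pos one_lt_two
    calc ∫ x, Real.logb 2 (p.rnDeriv q x).toReal ∂p
        = ∑' w : C, (a w).toReal * I w := hHS.tsum_eq.symm
      _ ≤ ∑' w : C, (a w).toReal * B w := Summable.tsum_le_tsum hBw hHS.summable hsumB
      _ = (∑' w : C, (a w).toReal * (w.1.length : ℝ))
          + ((∑' w : C, (a w).toReal * ((g w).toReal * (2 : ℝ) ^ (-(w.1.length : ℤ))))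
            - ∑' w : C, (a w).toReal) / Real.log 2 := by
          rw [e, Summable.tsum_add ht1.1 ((ht2.1.sub ht3.1).div_const _), tsum_div_const,
            Summable.tsum_sub ht2.1 ht3.1]
      _ ≤ (∑' w : C, (a w).toReal * (w.1.length : ℝ)) + 0 := by
          refine add_le_add le_rfl ?_
          refine div_nonpos_of_nonpos_of_nonneg ?_ h2log.le
          rw [ht3.2]
          linarith [ht2.2]
      _ = (∑' w : C, a w * (w.1.length : ℝ≥0∞)).toReal := by rw [add_zero, ht1.2]
  unfold klBits
  rw [if_pos (⟨hpq, hInt⟩ : p ≪ q ∧ Integrable (fun x => Real.logb 2 (p.rnDeriv q x).toReal) p)]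
  calc ((∫ x, Real.logb 2 (p.rnDeriv q x).toReal ∂p : ℝ) : EReal)
      ≤ (((∑' w : C, a w * (w.1.length : ℝ≥0∞)).toReal : ℝ) : EReal) :=
        EReal.coe_le_coe_iff.mpr key
    _ = ((∑' w : C, a w * (w.1.length : ℝ≥0∞) : ℝ≥0∞) : EReal) := by
        rw [← EReal.toReal_coe_ennreal, EReal.coe_toReal
          (by rwa [ne_eq, EReal.coe_ennreal_eq_top_iff]) (EReal.coe_ennreal_ne_bot _)]
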